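/- No finite sum of distinct terms of the form 1/n² (n a positive integer) lies in the open interval (π²/6 − 1, 1). Consequently, no finite union of the sets U_t of t-visible points in ℤ² can have asymptotic density lying strictly between 1 − 6/π² and 6/π². -/

import Mathlib

open Real

lemma sum_sq_le (s : Finset ℕ) (h1 : 1 ∉ s) :
    (∑ n ∈ s, (1 : ℝ) / (n : ℝ) ^ 2) ≤ Real.pi ^ 2 / 6 - 1 := by
  have H := hasSum_zeta_two
  have H2 : HasSum (Function.update (fun n : ℕ => (1 : ℝ) / (n : ℝ) ^ 2) 1 0)
      (Real.pi ^ 2 / 6 - 1 + 0) := by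
    have := H.update 1 0
    norm_num at this ⊢
    convert this using 1
    · rfl
    · ring
  have hle := sum_le_hasSum s ?_ H2
  · have : (∑ n ∈ s, Function.update (fun n : ℕ => (1 : ℝ) / (n : ℝ) ^ 2) 1 0 n)
        = ∑ n ∈ s, (1 : ℝ) / (n : ℝ) ^ 2 := by
      apply Finset.sum_congr rfl
      intro n hn
      rw [Function.update_of_ne (by rintro rfl; exact h1 hn)]
    rw [this] at hle
    linarith
  · intro i _
    rcases eq_or_ne i 1 with rfl | h
    · simp
    · rw [Function.update_of_ne h]
      positivity

theorem egyptian_squares_gap :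
    (∀ s : Finset ℕ, (∀ n ∈ s, 1 ≤ n) →
      (∑ n ∈ s, (1 : ℝ) / (n : ℝ) ^ 2) ∉ Set.Ioo (Real.pi ^ 2 / 6 - 1) 1) ∧
    (∀ s : Finset ℕ, (∀ t ∈ s, 1 ≤ t) →
      (∑ t ∈ s, 6 / (Real.pi ^ 2 * (t : ℝ) ^ 2)) ∉
        Set.Ioo (1 - 6 / Real.pi ^ 2) (6 / Real.pi ^ 2)) := by
  have pi_pos : (0 : ℝ) < Real.pi ^ 2 := by positivity
  have main : ∀ s : Finset ℕ, (∀ n ∈ s, 1 ≤ n) →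
      (∑ n ∈ s, (1 : ℝ) / (n : ℝ) ^ 2) ∉ Set.Ioo (Real.pi ^ 2 / 6 - 1) 1 := by
    intro s hs ⟨hlo, hhi⟩
    by_cases h1 : 1 ∈ s
    · -- sum ≥ 1, contradicting < 1
      have : (1 : ℝ) ≤ ∑ n ∈ s, (1 : ℝ) / (n : ℝ) ^ 2 := by
        have := Finset.single_le_sum (f := fun n : ℕ => (1 : ℝ) / (n : ℝ) ^ 2)
          (fun i _ => by positivity) h1
        simpa using this
      linarith
    · exact absurd (sum_sq_le s h1) (not_le.mpr hlo)
  refine ⟨main, fun s hs hmem => ?_⟩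
  apply main s hs
  obtain ⟨hlo, hhi⟩ := hmem
  have hrw : (∑ t ∈ s, 6 / (Real.pi ^ 2 * (t : ℝ) ^ 2))
      = (6 / Real.pi ^ 2) * ∑ t ∈ s, (1 : ℝ) / (t : ℝ) ^ 2 := by
    rw [Finset.mul_sum]
    apply Finset.sum_congr rfl
    intro n _
    field_simp
  rw [hrw] at hlo hhi
  have h6 : (0 : ℝ) < 6 / Real.pi ^ 2 := by positivity
  have key : 6 / Real.pi ^ 2 * Real.pi ^ 2 = 6 := by field_simp
  constructor
  · nlinarith
  · nlinarith
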